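/- Let λ̃ ≥ 0, and let C be the 3D elasticity tensor CE = λ̃ tr(E) I + 2E on Sym(3,ℝ). Let Q ∈ GL(3,ℝ) with QᵀQ = blockdiag(A, 1), where A ∈ Sym(2,ℝ) is positive definite. Let γ ∈ Sym(3,ℝ), π ∈ ℝ, α ∈ ℝ, and suppose the third column of Qᵀ(C(QγQᵀ) − απ I)Q vanishes, i.e. (Qᵀ(C(QγQᵀ) − απ I)Q)_{i3} = 0 for i = 1, 2, 3. Then γ_{13} = γ_{23} = 0 and γ_{33} = (α/(λ̃+2)) π − (λ̃/(λ̃+2)) (A : γ̄), where γ̄ is the upper-left 2×2 block of γ. -/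
import Mathlib


open Matrix

/-- Frobenius inner product `A : B = tr(A Bᵀ)`. -/
noncomputable def frob {n : ℕ} (A B : Matrix (Fin n) (Fin n) ℝ) : ℝ :=
  (A * Bᵀ).trace

/-- The 3D elasticity tensor `CE = λ̃ tr(E) I + 2E`. -/
noncomputable def C3 (lam : ℝ) (E : Matrix (Fin 3) (Fin 3) ℝ) :
    Matrix (Fin 3) (Fin 3) ℝ :=
  (lam * E.trace) • (1 : Matrix (Fin 3) (Fin 3) ℝ) + (2 : ℝ) • E

/-- Block diagonal matrix `blockdiag(A, 1)`. -/
def bd (A : Matrix (Fin 2) (Fin 2) ℝ) : Matrix (Fin 3) (Fin 3) ℝ :=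
  !![A 0 0, A 0 1, 0; A 1 0, A 1 1, 0; 0, 0, 1]

/-- Upper-left 2×2 block of a 3×3 matrix. -/
def ul (g : Matrix (Fin 3) (Fin 3) ℝ) : Matrix (Fin 2) (Fin 2) ℝ :=
  Matrix.of fun i j => g i.castSucc j.castSucc

/-- If the third column of `Qᵀ(C(QγQᵀ) − απ I)Q` vanishes, then `γ₁₃ = γ₂₃ = 0` and
`γ₃₃ = (α/(λ̃+2))π − (λ̃/(λ̃+2))(A : γ̄)`. -/
theorem stmt6 (lam : ℝ) (hlam : 0 ≤ lam)
    (Q : Matrix (Fin 3) (Fin 3) ℝ) (hQ : IsUnit Q.det)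
    (A : Matrix (Fin 2) (Fin 2) ℝ) (hAsym : A.IsSymm) (hApd : A.PosDef)
    (hQTQ : Qᵀ * Q = bd A)
    (γ : Matrix (Fin 3) (Fin 3) ℝ) (hγ : γ.IsSymm)
    (π0 α : ℝ)
    (hcol : ∀ i : Fin 3,
      (Qᵀ * (C3 lam (Q * γ * Qᵀ) - (α * π0) • (1 : Matrix (Fin 3) (Fin 3) ℝ)) * Q) i 2 = 0) :
    γ 0 2 = 0 ∧ γ 1 2 = 0 ∧
      γ 2 2 = (α / (lam + 2)) * π0 - (lam / (lam + 2)) * frob A (ul γ) := by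
  have ht : (Q * γ * Qᵀ).trace = (γ * bd A).trace := by
    rw [trace_mul_comm, ← mul_assoc, hQTQ, trace_mul_comm]
  have key : Qᵀ * (C3 lam (Q * γ * Qᵀ) - (α * π0) • (1 : Matrix (Fin 3) (Fin 3) ℝ)) * Q
      = (lam * (γ * bd A).trace - α * π0) • bd A + (2 : ℝ) • (bd A * γ * bd A) := by
    rw [C3, ht]
    have e1 : Qᵀ * ((lam * (γ * bd A).trace) • (1 : Matrix (Fin 3) (Fin 3) ℝ)) * Q
        = (lam * (γ * bd A).trace) • bd A := by
      rw [Matrix.mul_smul, Matrix.mul_one, Matrix.smul_mul, hQTQ]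
    have e2 : Qᵀ * ((2 : ℝ) • (Q * γ * Qᵀ)) * Q = (2 : ℝ) • (bd A * γ * bd A) := by
      rw [Matrix.mul_smul, Matrix.smul_mul]
      congr 1
      rw [show Qᵀ * (Q * γ * Qᵀ) * Q = (Qᵀ * Q) * γ * (Qᵀ * Q) by noncomm_ring, hQTQ]
    have e3 : Qᵀ * ((α * π0) • (1 : Matrix (Fin 3) (Fin 3) ℝ)) * Q = (α * π0) • bd A := by
      rw [Matrix.mul_smul, Matrix.mul_one, Matrix.smul_mul, hQTQ]
    rw [Matrix.mul_sub, Matrix.sub_mul, Matrix.mul_add, Matrix.add_mul, e1, e2, e3, sub_smul]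
    abel
  have h0 := hcol 0
  have h1 := hcol 1
  have h2 := hcol 2
  rw [key] at h0 h1 h2
  simp only [Matrix.add_apply, Matrix.smul_apply, Matrix.mul_apply, Fin.sum_univ_three,
    smul_eq_mul,
    show bd A 0 0 = A 0 0 from rfl, show bd A 0 1 = A 0 1 from rfl,
    show bd A 0 2 = 0 from rfl, show bd A 1 0 = A 1 0 from rfl,
    show bd A 1 1 = A 1 1 from rfl, show bd A 1 2 = 0 from rfl,
    show bd A 2 0 = 0 from rfl, show bd A 2 1 = 0 from rfl,
    show bd A 2 2 = 1 from rfl] at h0 h1 h2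
  have ha10 : A 1 0 = A 0 1 := by
    have := congrFun (congrFun hAsym 0) 1
    simpa [Matrix.transpose_apply] using this
  have hdet : A.det ≠ 0 := ne_of_gt hApd.det_pos
  rw [Matrix.det_fin_two] at hdet
  have e0 : A 0 0 * γ 0 2 + A 0 1 * γ 1 2 = 0 := by nlinarith [h0]
  have e1 : A 1 0 * γ 0 2 + A 1 1 * γ 1 2 = 0 := by nlinarith [h1]
  have hx : γ 0 2 = 0 := by
    have hh : (A 0 0 * A 1 1 - A 0 1 * A 1 0) * γ 0 2
        = A 1 1 * (A 0 0 * γ 0 2 + A 0 1 * γ 1 2)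
          - A 0 1 * (A 1 0 * γ 0 2 + A 1 1 * γ 1 2) := by ring
    rw [e0, e1] at hh
    simp only [mul_zero, sub_zero] at hh
    rcases mul_eq_zero.mp hh with h | h
    · exact absurd h hdet
    · exact h
  have hy : γ 1 2 = 0 := by
    have hh : (A 0 0 * A 1 1 - A 0 1 * A 1 0) * γ 1 2
        = A 0 0 * (A 1 0 * γ 0 2 + A 1 1 * γ 1 2)
          - A 1 0 * (A 0 0 * γ 0 2 + A 0 1 * γ 1 2) := by ring
    rw [e0, e1] at hh
    simp only [mul_zero, sub_zero] at hh
    rcases mul_eq_zero.mp hh with h | h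
    · exact absurd h hdet
    · exact h
  refine ⟨hx, hy, ?_⟩
  have hg10 : γ 1 0 = γ 0 1 := by
    have := congrFun (congrFun hγ 0) 1
    simpa [Matrix.transpose_apply] using this
  have htr : (γ * bd A).trace
      = γ 0 0 * A 0 0 + γ 0 1 * A 1 0 + (γ 1 0 * A 0 1 + γ 1 1 * A 1 1) + γ 2 2 := by
    simp only [Matrix.trace, Matrix.diag, Matrix.mul_apply, Fin.sum_univ_three,
      show bd A 0 0 = A 0 0 from rfl, show bd A 0 1 = A 0 1 from rfl,
      show bd A 0 2 = 0 from rfl, show bd A 1 0 = A 1 0 from rfl,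
      show bd A 1 1 = A 1 1 from rfl, show bd A 1 2 = 0 from rfl,
      show bd A 2 0 = 0 from rfl, show bd A 2 1 = 0 from rfl,
      show bd A 2 2 = 1 from rfl]
    ring
  have hfr : frob A (ul γ)
      = A 0 0 * γ 0 0 + A 0 1 * γ 0 1 + (A 1 0 * γ 1 0 + A 1 1 * γ 1 1) := by
    simp only [frob, ul, Matrix.trace, Matrix.diag, Matrix.mul_apply, Fin.sum_univ_two,
      Matrix.transpose_apply, Matrix.of_apply,
      show ((0 : Fin 2).castSucc : Fin 3) = 0 from rfl,
      show ((1 : Fin 2).castSucc : Fin 3) = 1 from rfl]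
  rw [htr] at h2
  have hlam2 : lam + 2 ≠ 0 := by positivity
  field_simp
  rw [hfr, ha10, hg10]
  rw [ha10, hg10] at h2
  linear_combination h2
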